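/- For every real x > 1/4, ∑_{k=0}^∞ 1/(x^{2k}·C(4k,2k)) = 16x²/(16x²−1) + 2x·( arccot(√(4x−1))/((4x−1)·√(4x−1)) − arccoth(√(4x+1))/((4x+1)·√(4x+1)) ). -/

import Mathlib

open MeasureTheory intervalIntegral Real

lemma beta_nat (n : ℕ) : ∫ t in (0:ℝ)..1, (t*(1-t))^n
    = (n.factorial * n.factorial : ℝ) / (2*n+1).factorial := by
  have hgen : ∀ k : ℕ, (∏ j ∈ Finset.range k, (n+1+j)) = (n+1).ascFactorial k := by
    intro k
    induction' k with k ih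
    · simp
    · rw [Finset.prod_range_succ, ih, Nat.ascFactorial_succ, mul_comm]
  have hprodn := hgen (n+1)
  have hfact : n.factorial * ∏ j ∈ Finset.range (n+1), (n+1+j) = (2*n+1).factorial := by
    rw [hprodn, Nat.factorial_mul_ascFactorial]
    congr 1; omega
  have h := Complex.betaIntegral_eval_nat_add_one_right (u := (n:ℂ)+1)
    (by simp; positivity) n
  have hb : Complex.betaIntegral ((n:ℂ)+1) ((n:ℂ)+1)
      = ((∫ t in (0:ℝ)..1, (t*(1-t))^n : ℝ) : ℂ) := by
    rw [Complex.betaIntegral, ← intervalIntegral.integral_ofReal]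
    refine intervalIntegral.integral_congr fun t ht => ?_
    have e1 : ((n:ℂ)+1-1) = ((n:ℕ):ℂ) := by ring
    rw [e1, Complex.cpow_natCast, Complex.cpow_natCast]
    push_cast [mul_pow]
    ring
  have hp : (∏ j ∈ Finset.range (n+1), ((n:ℂ)+1+(j:ℂ)))
      = ((∏ j ∈ Finset.range (n+1), (n+1+j) : ℕ) : ℂ) := by
    push_cast; ring_nf
  rw [hb, hp] at h
  have h2 : (∫ t in (0:ℝ)..1, (t*(1-t))^n)
      = (n.factorial : ℝ) / ((∏ j ∈ Finset.range (n+1), (n+1+j) : ℕ) : ℝ) := by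
    apply Complex.ofReal_inj.mp
    rw [h]; push_cast; ring
  have hn0 : (n.factorial : ℝ) ≠ 0 := Nat.cast_ne_zero.mpr n.factorial_ne_zero
  have h3 : ((2*n+1).factorial : ℝ) = (n.factorial : ℝ) * ((∏ j ∈ Finset.range (n+1), (n+1+j) : ℕ) : ℝ) := by
    exact_mod_cast hfact.symm
  rw [h2, h3, mul_div_mul_left _ _ hn0]

lemma inv_choose (k : ℕ) : (((4*k).choose (2*k) : ℕ) : ℝ)⁻¹
    = ((4*k : ℕ) + 1 : ℝ) * ∫ t in (0:ℝ)..1, (t*(1-t))^(2*k) := by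
  rw [beta_nat (2*k)]
  have e1 : 2*(2*k)+1 = 4*k+1 := by ring
  rw [e1]
  have hC : (((4*k).choose (2*k)) * ((2*k).factorial * (2*k).factorial) : ℕ) = (4*k).factorial := by
    have h := Nat.choose_mul_factorial_mul_factorial (show 2*k ≤ 4*k by omega)
    have e2 : 4*k - 2*k = 2*k := by omega
    rw [e2] at h
    rw [← h]; ring
  have hCR : (((4*k).choose (2*k) : ℕ) : ℝ) * (((2*k).factorial : ℕ) : ℝ) * (((2*k).factorial : ℕ) : ℝ)
      = (((4*k).factorial : ℕ) : ℝ) := by exact_mod_cast by rw [← hC]; ring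
  have hfac : (((4*k+1).factorial : ℕ) : ℝ) = ((4*k:ℕ)+1 : ℝ) * (((4*k).factorial : ℕ) : ℝ) := by
    rw [Nat.factorial_succ]; push_cast; ring
  rw [hfac]
  have h1 : (((4*k).choose (2*k) : ℕ) : ℝ) ≠ 0 := Nat.cast_ne_zero.mpr (Nat.choose_pos (show 2*k ≤ 4*k by omega)).ne'
  have h2 : (((2*k).factorial : ℕ) : ℝ) ≠ 0 := Nat.cast_ne_zero.mpr (Nat.factorial_ne_zero _)
  have h3 : (((4*k).factorial : ℕ) : ℝ) ≠ 0 := Nat.cast_ne_zero.mpr (Nat.factorial_ne_zero _)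
  have h4 : ((4*k:ℕ)+1 : ℝ) ≠ 0 := by positivity
  field_simp
  nlinarith [hCR]

lemma summable_aux {w : ℝ} (h0 : 0 ≤ w) (h1 : w < 1) :
    Summable (fun k : ℕ => (4*(k:ℝ)+1) * w^k) := by
  have hn : ‖w‖ < 1 := by rwa [Real.norm_eq_abs, abs_of_nonneg h0]
  have s1 : Summable (fun k : ℕ => (k:ℝ) * w^k) :=
    (hasSum_coe_mul_geometric_of_norm_lt_one hn).summable
  have s2 : Summable (fun k : ℕ => w^k) := summable_geometric_of_lt_one h0 h1
  have := (s1.mul_left 4).add s2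
  refine this.congr fun k => ?_
  ring


lemma tsum_aux {w : ℝ} (h0 : 0 ≤ w) (h1 : w < 1) :
    ∑' k : ℕ, (4*(k:ℝ)+1) * w^k = (1+3*w)/(1-w)^2 := by
  have hn : ‖w‖ < 1 := by rwa [Real.norm_eq_abs, abs_of_nonneg h0]
  have s1 : Summable (fun k : ℕ => (k:ℝ) * w^k) :=
    (hasSum_coe_mul_geometric_of_norm_lt_one hn).summable
  have s2 : Summable (fun k : ℕ => w^k) := summable_geometric_of_lt_one h0 h1
  have e : ∀ k : ℕ, (4*(k:ℝ)+1) * w^k = 4*((k:ℝ)*w^k) + w^k := fun k => by ring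
  rw [tsum_congr e, Summable.tsum_add (s1.mul_left 4) s2, tsum_mul_left,
    tsum_coe_mul_geometric_of_norm_lt_one hn, tsum_geometric_of_lt_one h0 h1]
  have hw : (1:ℝ) - w ≠ 0 := by linarith
  field_simp
  ring

set_option maxHeartbeats 2000000 in
lemma integral_G {x : ℝ} (hx : 1/4 < x) :
    ∫ t in (0:ℝ)..1, (x^2/(t^2-t+x)^2 + x^2/(x+t-t^2)^2
        - x/(2*(t^2-t+x)) - x/(2*(x+t-t^2)))
      = 2*x/(4*x-1) + 2*x/(4*x+1)
        + 2*x/((4*x-1)*Real.sqrt (4*x-1)) * Real.arctan (1/Real.sqrt (4*x-1))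
        - x/((4*x+1)*Real.sqrt (4*x+1))
          * Real.log ((Real.sqrt (4*x+1)+1)/(Real.sqrt (4*x+1)-1)) := by
  have hx0 : (0:ℝ) < x := by linarith
  have h1 : (0:ℝ) < 4*x-1 := by linarith
  have h2 : (0:ℝ) < 4*x+1 := by linarith
  set s := Real.sqrt (4*x-1) with hsdef
  set r := Real.sqrt (4*x+1) with hrdef
  have hs0 : 0 < s := Real.sqrt_pos.mpr h1
  have hs2 : s^2 = 4*x-1 := Real.sq_sqrt h1.le
  have hr0 : 0 < r := Real.sqrt_pos.mpr h2
  have hr2 : r^2 = 4*x+1 := Real.sq_sqrt h2.le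
  have hr1 : 1 < r := by nlinarith
  have hQ : ∀ t : ℝ, 0 < t^2-t+x := by
    intro t; nlinarith [sq_nonneg (2*t-1)]
  have hP : ∀ t ∈ Set.Icc (0:ℝ) 1, 0 < x+t-t^2 := by
    intro t ht; obtain ⟨ha, hb⟩ := ht; nlinarith
  set Φ : ℝ → ℝ := fun t =>
      x^2*((2*t-1)/((4*x-1)*(t^2-t+x)))
      + (4*x^2/((4*x-1)*s) - x/s) * Real.arctan ((2*t-1)/s)
      + x^2*((2*t-1)/((4*x+1)*(x+t-t^2)))
      + (2*x^2/((4*x+1)*r) - x/(2*r))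
          * (Real.log (t-(1-r)/2) - Real.log ((1+r)/2-t)) with hΦ
  have key : ∀ t ∈ Set.uIcc (0:ℝ) 1,
      HasDerivAt Φ (x^2/(t^2-t+x)^2 + x^2/(x+t-t^2)^2
        - x/(2*(t^2-t+x)) - x/(2*(x+t-t^2))) t := by
    intro t ht
    rw [Set.uIcc_of_le (by norm_num : (0:ℝ) ≤ 1)] at ht
    obtain ⟨ht0, ht1⟩ := ht
    have hQt := hQ t
    have hPt := hP t ⟨ht0, ht1⟩
    have hβ : 0 < t-(1-r)/2 := by linarith
    have hα : 0 < (1+r)/2-t := by linarith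
    have hnum : HasDerivAt (fun t : ℝ => 2*t-1) 2 t := by
      simpa using ((hasDerivAt_id t).const_mul 2).sub_const 1
    have hQd : HasDerivAt (fun t : ℝ => t^2-t+x) (2*t-1) t := by
      have := (((hasDerivAt_id t).pow 2).sub (hasDerivAt_id t)).add_const x
      simpa using this
    have hPd : HasDerivAt (fun t : ℝ => x+t-t^2) (1-2*t) t := by
      have := ((hasDerivAt_id t).const_add x).sub ((hasDerivAt_id t).pow 2)
      simpa [Pi.sub_def] using this
    -- piece 1
    have p1 : HasDerivAt (fun t : ℝ => (2*t-1)/((4*x-1)*(t^2-t+x)))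
        (1/(t^2-t+x)^2 - 2/((4*x-1)*(t^2-t+x))) t := by
      have hd := hnum.div (hQd.const_mul (4*x-1)) (mul_ne_zero h1.ne' hQt.ne')
      refine hd.congr_deriv ?_
      field_simp
      ring
    -- piece 2 : arctan
    have p2 : HasDerivAt (fun t : ℝ => Real.arctan ((2*t-1)/s))
        (s/(2*(t^2-t+x))) t := by
      have hi : HasDerivAt (fun t : ℝ => (2*t-1)/s) (2/s) t := hnum.div_const s
      have hd := hi.arctan
      convert hd using 1
      have e1 : 1 + ((2*t-1)/s)^2 = 4*(t^2-t+x)/s^2 := by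
        field_simp
        linear_combination hs2
      rw [e1]
      field_simp
      ring
    -- piece 3
    have p3 : HasDerivAt (fun t : ℝ => (2*t-1)/((4*x+1)*(x+t-t^2)))
        (1/(x+t-t^2)^2 - 2/((4*x+1)*(x+t-t^2))) t := by
      have hd := hnum.div (hPd.const_mul (4*x+1)) (mul_ne_zero h2.ne' hPt.ne')
      refine hd.congr_deriv ?_
      field_simp
      ring
    -- piece 4 : logs
    have p4 : HasDerivAt (fun t : ℝ => Real.log (t-(1-r)/2) - Real.log ((1+r)/2-t))
        (r/(x+t-t^2)) t := by
      have hd1 : HasDerivAt (fun t : ℝ => Real.log (t-(1-r)/2))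
          (1/(t-(1-r)/2)) t := by
        simpa using ((hasDerivAt_id t).sub_const ((1-r)/2)).log hβ.ne'
      have hd2 : HasDerivAt (fun t : ℝ => Real.log ((1+r)/2-t))
          ((-1)/((1+r)/2-t)) t := by
        simpa using ((hasDerivAt_id t).const_sub ((1+r)/2)).log hα.ne'
      have hd := hd1.sub hd2
      refine hd.congr_deriv ?_
      have e : x+t-t^2 = (t-(1-r)/2)*((1+r)/2-t) := by
        linear_combination (-1/4 : ℝ) * hr2
      rw [e, div_sub_div _ _ hβ.ne' hα.ne']
      congr 1
      ring
    have hd := (((p1.const_mul (x^2)).add (p2.const_mul (4*x^2/((4*x-1)*s) - x/s))).add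
      (p3.const_mul (x^2))).add (p4.const_mul (2*x^2/((4*x+1)*r) - x/(2*r)))
    refine hd.congr_deriv ?_
    have hQt' : t*(t-1)+x ≠ 0 := by nlinarith
    have h1' : x*4-1 ≠ 0 := by linarith
    field_simp
    ring
  have hcont : IntervalIntegrable (fun t : ℝ => x^2/(t^2-t+x)^2 + x^2/(x+t-t^2)^2
      - x/(2*(t^2-t+x)) - x/(2*(x+t-t^2))) volume 0 1 := by
    apply ContinuousOn.intervalIntegrable
    rw [Set.uIcc_of_le (by norm_num : (0:ℝ) ≤ 1)]
    have c1 : ContinuousOn (fun t : ℝ => x^2/(t^2-t+x)^2) (Set.Icc 0 1) :=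
      ContinuousOn.div (by fun_prop) (by fun_prop)
        (fun t _ => pow_ne_zero 2 (hQ t).ne')
    have c2 : ContinuousOn (fun t : ℝ => x^2/(x+t-t^2)^2) (Set.Icc 0 1) :=
      ContinuousOn.div (by fun_prop) (by fun_prop)
        (fun t ht => pow_ne_zero 2 (hP t ht).ne')
    have c3 : ContinuousOn (fun t : ℝ => x/(2*(t^2-t+x))) (Set.Icc 0 1) :=
      ContinuousOn.div (by fun_prop) (by fun_prop)
        (fun t _ => mul_ne_zero two_ne_zero (hQ t).ne')
    have c4 : ContinuousOn (fun t : ℝ => x/(2*(x+t-t^2))) (Set.Icc 0 1) :=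
      ContinuousOn.div (by fun_prop) (by fun_prop)
        (fun t ht => mul_ne_zero two_ne_zero (hP t ht).ne')
    exact ((c1.add c2).sub c3).sub c4
  rw [intervalIntegral.integral_eq_sub_of_hasDerivAt key hcont]
  -- evaluate
  simp only [hΦ]
  norm_num
  rw [show (1:ℝ) - (1-r)/2 = (r+1)/2 by ring,
      show ((1:ℝ)+r)/2 - 1 = (r-1)/2 by ring,
      show ((1:ℝ)-r)/2 = -((r-1)/2) by ring,
      show ((1:ℝ)+r)/2 = (r+1)/2 by ring,
      Real.log_neg_eq_log,
      show (-1/s : ℝ) = -(s⁻¹) by ring,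
      Real.arctan_neg]
  have l1 : Real.log ((r+1)/2) = Real.log (r+1) - Real.log 2 :=
    Real.log_div (by positivity) (by norm_num)
  have l2 : Real.log ((r-1)/2) = Real.log (r-1) - Real.log 2 :=
    Real.log_div (ne_of_gt (by linarith)) (by norm_num)
  have l3 : Real.log ((r+1)/(r-1)) = Real.log (r+1) - Real.log (r-1) :=
    Real.log_div (by positivity) (ne_of_gt (by linarith))
  rw [l1, l2, l3]
  have h1' : x*4-1 ≠ 0 := by linarith
  field_simp
  ring


theorem stmt_10 (x : ℝ) (hx : 1 / 4 < x) :
    ∑' k : ℕ, 1 / (x ^ (2 * k) * (Nat.choose (4 * k) (2 * k) : ℝ)) =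
      16 * x ^ 2 / (16 * x ^ 2 - 1) +
        2 * x *
          (Real.arctan (1 / Real.sqrt (4 * x - 1)) / ((4 * x - 1) * Real.sqrt (4 * x - 1)) -
            (1 / 2) * Real.log ((Real.sqrt (4 * x + 1) + 1) / (Real.sqrt (4 * x + 1) - 1)) /
              ((4 * x + 1) * Real.sqrt (4 * x + 1))) := by
  have hx0 : (0:ℝ) < x := by linarith
  set F : ℕ → ℝ → ℝ := fun k t => (4*(k:ℝ)+1) * ((t*(1-t))/x)^(2*k) with hF
  -- basic bound facts
  have hxi : 1/(4*x) < 1 := by rw [div_lt_one (by linarith)]; linarith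
  have hxi0 : 0 ≤ 1/(4*x) := by positivity
  have hbnd : ∀ t ∈ Set.Icc (0:ℝ) 1, 0 ≤ (t*(1-t))/x ∧ (t*(1-t))/x ≤ 1/(4*x) := by
    intro t ht
    obtain ⟨h0, h1⟩ := ht
    constructor
    · apply div_nonneg _ hx0.le; nlinarith
    · rw [div_le_div_iff₀ hx0 (by positivity : (0:ℝ) < 4*x)]
      nlinarith [sq_nonneg (2*t-1)]
  have hFcont : ∀ k : ℕ, Continuous (F k) := by
    intro k; rw [hF]; fun_prop
  have hFnonneg : ∀ k t, 0 ≤ F k t := by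
    intro k t; simp only [hF]
    apply mul_nonneg (by positivity)
    rw [mul_comm 2 k, pow_mul]
    positivity
  -- step 1 : each term equals an integral
  have hterm : ∀ k : ℕ, 1 / (x ^ (2*k) * (((4*k).choose (2*k) : ℕ) : ℝ))
      = ∫ t in Set.Ioc (0:ℝ) 1, F k t := by
    intro k
    rw [← intervalIntegral.integral_of_le (by norm_num : (0:ℝ) ≤ 1)]
    have e : ∀ t ∈ Set.uIcc (0:ℝ) 1, F k t
        = ((4*(k:ℝ)+1) / x^(2*k)) * (t*(1-t))^(2*k) := by
      intro t _; rw [hF]; simp only [div_pow]; ring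
    rw [intervalIntegral.integral_congr e, intervalIntegral.integral_const_mul]
    have hxk : x^(2*k) ≠ 0 := by positivity
    have hiv := inv_choose k
    rw [one_div, mul_inv, mul_comm, hiv]
    push_cast
    ring
  rw [tsum_congr hterm]
  -- step 2 : swap tsum and integral
  have hint : ∀ k : ℕ, Integrable (F k) (volume.restrict (Set.Ioc (0:ℝ) 1)) := by
    intro k
    exact (hFcont k).integrableOn_Ioc
  have hsum : Summable (fun k : ℕ => ∫ t in Set.Ioc (0:ℝ) 1, ‖F k t‖) := by
    have hb : Summable (fun k : ℕ => (4*(k:ℝ)+1) * ((1/(4*x))^2)^k) :=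
      summable_aux (by positivity) (by nlinarith)
    apply Summable.of_nonneg_of_le
      (fun k => integral_nonneg (fun t => norm_nonneg _)) _ hb
    intro k
    have hle : ∫ t in Set.Ioc (0:ℝ) 1, ‖F k t‖
        ≤ ∫ _t in Set.Ioc (0:ℝ) 1, (4*(k:ℝ)+1) * (1/(4*x))^(2*k) := by
      apply setIntegral_mono_on ((hFcont k).norm.integrableOn_Ioc)
        (integrableOn_const measure_Ioc_lt_top.ne) measurableSet_Ioc
      intro t ht
      have ht' : t ∈ Set.Icc (0:ℝ) 1 := ⟨ht.1.le, ht.2⟩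
      obtain ⟨hu0, hu1⟩ := hbnd t ht'
      rw [Real.norm_eq_abs, abs_of_nonneg (hFnonneg k t), hF]
      have hpw : ((t*(1-t))/x)^(2*k) ≤ (1/(4*x))^(2*k) :=
        pow_le_pow_left₀ hu0 hu1 _
      have hk : (0:ℝ) ≤ 4*(k:ℝ)+1 := by positivity
      exact mul_le_mul_of_nonneg_left hpw hk
    calc ∫ t in Set.Ioc (0:ℝ) 1, ‖F k t‖
        ≤ ∫ _t in Set.Ioc (0:ℝ) 1, (4*(k:ℝ)+1) * (1/(4*x))^(2*k) := hle
      _ = (4*(k:ℝ)+1) * ((1/(4*x))^2)^k := by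
          rw [setIntegral_const]
          simp [← pow_mul]
  rw [MeasureTheory.integral_tsum_of_summable_integral_norm hint hsum]
  -- step 3 : pointwise sum
  have hptwise : ∀ t ∈ Set.Ioc (0:ℝ) 1, ∑' k : ℕ, F k t
      = x^2/(t^2-t+x)^2 + x^2/(x+t-t^2)^2 - x/(2*(t^2-t+x)) - x/(2*(x+t-t^2)) := by
    intro t ht
    have ht' : t ∈ Set.Icc (0:ℝ) 1 := ⟨ht.1.le, ht.2⟩
    obtain ⟨hu0, hu1⟩ := hbnd t ht'
    set u : ℝ := (t*(1-t))/x with hu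
    have hw1 : u^2 < 1 := by nlinarith
    have hw0 : (0:ℝ) ≤ u^2 := sq_nonneg u
    have e2 : ∑' k : ℕ, F k t = ∑' k : ℕ, (4*(k:ℝ)+1) * (u^2)^k := by
      apply tsum_congr; intro k; simp only [hF, pow_mul, hu]
    rw [e2, tsum_aux hw0 hw1]
    have hQ : t^2-t+x = x*(1-u) := by
      rw [hu]; field_simp; ring
    have hP : x+t-t^2 = x*(1+u) := by
      rw [hu]; field_simp; ring
    have h1u : (0:ℝ) < 1-u := by nlinarith
    have h2u : (0:ℝ) < 1+u := by linarith
    rw [hQ, hP]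
    clear_value u
    have e3 : (1:ℝ)-u^2 = (1-u)*(1+u) := by ring
    rw [e3]
    field_simp [h1u.ne', h2u.ne', hx0.ne']
    ring
  rw [setIntegral_congr_fun measurableSet_Ioc hptwise,
    ← intervalIntegral.integral_of_le (by norm_num : (0:ℝ) ≤ 1), integral_G hx]
  -- final algebra
  have h1 : (0:ℝ) < 4*x-1 := by linarith
  have h2 : (0:ℝ) < 4*x+1 := by linarith
  have hs : (0:ℝ) < Real.sqrt (4*x-1) := Real.sqrt_pos.mpr h1
  have hr : (0:ℝ) < Real.sqrt (4*x+1) := Real.sqrt_pos.mpr h2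
  have h16 : (16*x^2-1 : ℝ) ≠ 0 := by nlinarith
  have h1' : x*4-1 ≠ 0 := by linarith
  have hs' : √(x*4-1) ≠ 0 := by rw [mul_comm]; exact hs.ne'
  have h16' : x^2*16-1 ≠ 0 := by rw [mul_comm]; exact h16
  field_simp
  ring
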